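/- Let Δ ∈ (0,1), γ > 1, q₀ = 1/Δ, and f₀(x) = x^{-Δ}|log x|^γ on (0,1). Then there exist constants 0 < c ≤ C (depending on Δ, γ) such that for all p in a left neighborhood of q₀ (say p ∈ (q₀/2, q₀)): c·(q₀ - p)^{-γ - 1/p} ≤ ‖f₀‖_{L^p((0,1))} ≤ C·(q₀ - p)^{-γ - 1/p}. -/

import Mathlib

open MeasureTheory Real Set

lemma aux_integral (Δ γ p : ℝ) (hΔ0 : 0 < Δ) (hp0 : 0 < p) (hγp : 0 < γ * p)
    (hr : Δ * p < 1) :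
    ∫ x in Ioo (0:ℝ) 1, (x ^ (-Δ) * (-Real.log x) ^ γ) ^ p
      = (1 / (1 - Δ * p)) ^ (γ * p + 1) * Real.Gamma (γ * p + 1) := by
  have himg : Ioo (0:ℝ) 1 = (fun t : ℝ => Real.exp (-t)) '' Ioi 0 := by
    ext x
    constructor
    · rintro ⟨hx0, hx1⟩
      exact ⟨-Real.log x, by simpa using Real.log_neg hx0 hx1,
        by simp [Real.exp_log hx0]⟩
    · rintro ⟨t, ht, rfl⟩
      exact ⟨Real.exp_pos _, by simpa using Real.exp_lt_one_iff.2 (neg_lt_zero.2 (mem_Ioi.1 ht))⟩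
  have hderiv : ∀ t ∈ Ioi (0:ℝ), HasDerivWithinAt (fun t : ℝ => Real.exp (-t))
      (-Real.exp (-t)) (Ioi 0) t := by
    intro t _
    have := ((Real.hasDerivAt_exp (-t)).comp t (hasDerivAt_neg t))
    simpa [mul_comm, Function.comp_def] using this.hasDerivWithinAt
  have hinj : InjOn (fun t : ℝ => Real.exp (-t)) (Ioi 0) := by
    intro a _ b _ hab
    have := Real.exp_injective hab
    linarith
  rw [himg, integral_image_eq_integral_abs_deriv_smul measurableSet_Ioi hderiv hinj]
  have hcongr : ∀ t ∈ Ioi (0:ℝ),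
      |(-Real.exp (-t))| • ((Real.exp (-t)) ^ (-Δ) * (-Real.log (Real.exp (-t))) ^ γ) ^ p
        = t ^ (γ * p + 1 - 1) * Real.exp (-((1 - Δ * p) * t)) := by
    intro t ht
    have ht0 : (0:ℝ) < t := ht
    have h1 : |(-Real.exp (-t))| = Real.exp (-t) := by
      rw [abs_neg, abs_of_pos (Real.exp_pos _)]
    have h2 : (Real.exp (-t)) ^ (-Δ) = Real.exp (Δ * t) := by
      rw [Real.rpow_def_of_pos (Real.exp_pos _), Real.log_exp]
      ring_nf
    have h3 : -Real.log (Real.exp (-t)) = t := by rw [Real.log_exp]; ring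
    rw [h1, h2, h3, smul_eq_mul,
      Real.mul_rpow (Real.exp_pos _).le (Real.rpow_nonneg ht0.le _),
      ← Real.exp_mul, ← Real.rpow_mul ht0.le, ← mul_assoc, ← Real.exp_add,
      show -t + Δ * t * p = -((1 - Δ * p) * t) by ring,
      show γ * p + 1 - 1 = γ * p by ring, mul_comm]
  rw [setIntegral_congr_fun measurableSet_Ioi hcongr]
  exact Real.integral_rpow_mul_exp_neg_mul_Ioi (by linarith) (by linarith)

noncomputable def haux (Δ γ : ℝ) : ℝ → ℝ :=
  fun p => Real.Gamma (γ * p + 1) ^ (1/p) * Δ ^ (-γ - 1/p)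

/-- For `Δ ∈ (0,1)`, `γ > 1`, `q₀ = 1/Δ` and `f₀(x) = x^{-Δ}(-log x)^γ` on `(0,1)`,
the `L^p` norm of `f₀` is comparable to `(q₀ - p)^{-γ-1/p}` for `p ∈ (q₀/2, q₀)`. -/
theorem f0_Lp_norm_asymptotics (Δ γ : ℝ) (hΔ : Δ ∈ Ioo (0:ℝ) 1) (hγ : 1 < γ) :
    ∃ c C : ℝ, 0 < c ∧ c ≤ C ∧
      ∀ p ∈ Ioo (1/Δ/2) (1/Δ),
        c * (1/Δ - p) ^ (-γ - 1/p)
            ≤ (∫ x in Ioo (0:ℝ) 1, (x ^ (-Δ) * (-Real.log x) ^ γ) ^ p) ^ (1/p) ∧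
        (∫ x in Ioo (0:ℝ) 1, (x ^ (-Δ) * (-Real.log x) ^ γ) ^ p) ^ (1/p)
            ≤ C * (1/Δ - p) ^ (-γ - 1/p) := by
  obtain ⟨hΔ0, hΔ1⟩ := hΔ
  have hq0 : 0 < 1/Δ := by positivity
  have hΔinv : Δ * (1/Δ) = 1 := mul_one_div_cancel hΔ0.ne'
  have hcont : ContinuousOn (haux Δ γ) (Icc (1/Δ/2) (1/Δ)) := by
    intro p hp
    have hp0 : 0 < p := lt_of_lt_of_le (by linarith) hp.1
    have hγp1 : 0 < γ * p + 1 := by nlinarith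
    have hΓ : 0 < Real.Gamma (γ * p + 1) := Real.Gamma_pos_of_pos hγp1
    have hms : ∀ m : ℕ, γ * p + 1 ≠ -m := by
      intro m
      have : (0:ℝ) ≤ m := Nat.cast_nonneg m
      intro hcontra; rw [hcontra] at hγp1; linarith
    have haff : Continuous (fun p : ℝ => γ * p + 1) := by continuity
    have hc1 : ContinuousAt (fun p => Real.Gamma (γ * p + 1)) p :=
      ContinuousAt.comp (g := Real.Gamma) (x := p)
        (Real.differentiableAt_Gamma hms).continuousAt haff.continuousAt
    have hc2 : ContinuousAt (fun p : ℝ => 1/p) p :=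
      continuousAt_const.div continuousAt_id hp0.ne'
    apply ContinuousAt.continuousWithinAt
    exact (hc1.rpow hc2 (Or.inl hΓ.ne')).mul
      ((continuousAt_const.rpow (continuousAt_const.sub hc2) (Or.inl hΔ0.ne')))
  have hpos : ∀ p ∈ Icc (1/Δ/2) (1/Δ), 0 < haux Δ γ p := by
    intro p hp
    have hp0 : 0 < p := lt_of_lt_of_le (by linarith) hp.1
    have hΓ : 0 < Real.Gamma (γ * p + 1) := Real.Gamma_pos_of_pos (by nlinarith)
    exact mul_pos (Real.rpow_pos_of_pos hΓ _) (Real.rpow_pos_of_pos hΔ0 _)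
  have hne : (Icc (1/Δ/2) (1/Δ)).Nonempty := ⟨1/Δ, by constructor <;> linarith⟩
  obtain ⟨pc, hpc, hmin'⟩ := isCompact_Icc.exists_isMinOn hne hcont
  obtain ⟨pC, hpC, hmax'⟩ := isCompact_Icc.exists_isMaxOn hne hcont
  have hmin : ∀ q ∈ Icc (1/Δ/2) (1/Δ), haux Δ γ pc ≤ haux Δ γ q := fun q hq => hmin' hq
  have hmax : ∀ q ∈ Icc (1/Δ/2) (1/Δ), haux Δ γ q ≤ haux Δ γ pC := fun q hq => hmax' hq
  refine ⟨haux Δ γ pc, haux Δ γ pC, hpos pc hpc, hmin pC hpC, ?_⟩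
  intro p hp
  obtain ⟨hp1, hp2⟩ := hp
  have hp0 : 0 < p := lt_trans (by linarith) hp1
  have hu : 0 < 1/Δ - p := by linarith
  have hΔp : Δ * p < 1 := by nlinarith
  have hr0 : 0 < 1 - Δ * p := by linarith
  have hΔu : 1 - Δ * p = Δ * (1/Δ - p) := by rw [mul_sub, hΔinv]
  have hγp1 : 0 < γ * p + 1 := by nlinarith
  have hΓ : 0 < Real.Gamma (γ * p + 1) := Real.Gamma_pos_of_pos hγp1
  have hkey : (∫ x in Ioo (0:ℝ) 1, (x ^ (-Δ) * (-Real.log x) ^ γ) ^ p) ^ (1/p)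
      = haux Δ γ p * (1/Δ - p) ^ (-γ - 1/p) := by
    rw [aux_integral Δ γ p hΔ0 hp0 (by nlinarith) hΔp,
      Real.mul_rpow (Real.rpow_nonneg (by positivity) _) hΓ.le,
      ← Real.rpow_mul (by positivity),
      show (γ * p + 1) * (1/p) = γ + 1/p by field_simp,
      show (1:ℝ)/(1 - Δ * p) = (Δ * (1/Δ - p))⁻¹ by rw [← hΔu, one_div],
      Real.inv_rpow (by positivity), ← Real.rpow_neg (by positivity),
      Real.mul_rpow hΔ0.le hu.le,
      show -(γ + 1/p) = -γ - 1/p by ring]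
    unfold haux
    ring
  constructor
  · rw [hkey]
    exact mul_le_mul_of_nonneg_right (hmin p ⟨hp1.le, hp2.le⟩)
      (Real.rpow_nonneg hu.le _)
  · rw [hkey]
    exact mul_le_mul_of_nonneg_right (hmax p ⟨hp1.le, hp2.le⟩)
      (Real.rpow_nonneg hu.le _)
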